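/- Let g_1,…,g_d be a C^{1+ε} Cantor system on [0,1] with scaling function S. Then there exists K ≥ 1 such that for all j ≠ j' in Σ_d^dual, (1/K) · ρ_S(j,j') ≤ |I_{j∩j'}| ≤ K · ρ_S(j,j'). -/

import Mathlib

open Set Filter

noncomputable section

/-- The unit interval `[0,1] ⊆ ℝ`. -/
abbrev I01 : Set ℝ := Set.Icc (0:ℝ) 1

/-- `ψ` satisfies an `ε`-Hölder bound with constant `H` on `[0,1]`. -/
def HolderBoundOn01 (ε H : ℝ) (ψ : ℝ → ℝ) : Prop :=
  ∀ x ∈ I01, ∀ y ∈ I01, |ψ x - ψ y| ≤ H * |x - y| ^ ε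

/-- A `C^{k+ε}` Cantor system on `[0,1]` with `d` branches: each branch `g i` is a
`C^k` increasing contraction of `[0,1]` with `ε`-Hölder `k`-th derivative, the images
`g i ([0,1])` are disjoint closed intervals in increasing order, `g 0 0 = 0` and
`g (d-1) 1 = 1`. -/
structure IsCantorSystem {d : ℕ} (k : ℕ) (ε : ℝ) (g : Fin d → ℝ → ℝ) : Prop where
  maps : ∀ i, Set.MapsTo (g i) I01 I01
  smooth : ∀ i, ContDiffOn ℝ k (g i) I01
  holder : ∀ i, ∃ H > 0, HolderBoundOn01 ε H (iteratedDerivWithin k (g i) I01)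
  deriv_pos : ∀ i, ∀ x ∈ I01, 0 < derivWithin (g i) I01 x
  deriv_lt_one : ∀ i, ∀ x ∈ I01, derivWithin (g i) I01 x < 1
  ordered : ∀ i j : Fin d, i < j → g i 1 < g j 0
  first : ∀ i : Fin d, (i : ℕ) = 0 → g i 0 = 0
  last : ∀ i : Fin d, (i : ℕ) = d - 1 → g i 1 = 1

/-- For a finite word `w = [w₁,…,wₙ]`, `wordMap g w = g_{wₙ} ∘ ⋯ ∘ g_{w₁}` (i.e. `G_w`). -/
def wordMap {d : ℕ} (g : Fin d → ℝ → ℝ) : List (Fin d) → ℝ → ℝ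
  | [] => id
  | i :: w => fun x => wordMap g w (g i x)

/-- `|I_w|`, the length of the interval `I_w = G_w([0,1]) = [G_w 0, G_w 1]`. -/
def wordLen {d : ℕ} (g : Fin d → ℝ → ℝ) (w : List (Fin d)) : ℝ :=
  wordMap g w 1 - wordMap g w 0

/-- The scaling data of the word `w`: the first `d` coordinates are the ratios
`|I_{i·w}|/|I_w|`, the last `d-1` coordinates are the `d-1` gap lengths between the
consecutive children `I_{1·w},…,I_{d·w}` divided by `|I_w|`. -/
def scalingData {d : ℕ} (g : Fin d → ℝ → ℝ) (w : List (Fin d)) : Fin (2*d-1) → ℝ :=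
  fun m =>
    if h : (m : ℕ) < d then
      wordLen g ((⟨(m : ℕ), h⟩ : Fin d) :: w) / wordLen g w
    else
      (wordMap g w (g ⟨(m : ℕ) - d + 1, by have := m.isLt; omega⟩ 0)
        - wordMap g w (g ⟨(m : ℕ) - d, by have := m.isLt; omega⟩ 1)) / wordLen g w

/-- The open simplex `Simp_{2d-2} ⊆ (0,1)^{2d-1}` of vectors with coordinate sum `1`. -/
def Simp (d : ℕ) : Set (Fin (2*d-1) → ℝ) :=
  {s | (∀ m, s m ∈ Set.Ioo (0:ℝ) 1) ∧ ∑ m, s m = 1}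

/-- The initial word `j|_n = (j_1,…,j_n)` of a sequence `j ∈ Σ_d^dual = {1,…,d}^ℕ`. -/
def dword {d : ℕ} (j : ℕ → Fin d) (n : ℕ) : List (Fin d) :=
  List.ofFn (fun i : Fin n => j i)

/-- `S` is the scaling function of the system `g`:
`S(j) = lim_{n→∞} S_n(j|_n)` for every `j ∈ Σ_d^dual`. -/
def HasScalingFunction {d : ℕ} (g : Fin d → ℝ → ℝ) (S : (ℕ → Fin d) → Fin (2*d-1) → ℝ) : Prop :=
  ∀ j : ℕ → Fin d,
    Filter.Tendsto (fun n => scalingData g (dword j n)) Filter.atTop (nhds (S j))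

/-- `ρ_S(j,j')` where `n = #(j∩j')`:
`ρ_S(j,j') = sup_w ∏_{t=1}^{n} S((j_{t+1},…,j_n)·w)_{j_t}` (depends only on `j` and `n`). -/
def rhoS {d : ℕ} (S : (ℕ → Fin d) → Fin (2*d-1) → ℝ) (j : ℕ → Fin d) (n : ℕ) : ℝ :=
  ⨆ w : ℕ → Fin d, ∏ t ∈ Finset.range n,
    S (fun m => if t + 1 + m < n then j (t + 1 + m) else w (t + 1 + m - n))
      ⟨((j t) : ℕ), by have := (j t).isLt; omega⟩

/-- Given a scaling vector `s ∈ Simp_{2d-2}`, the partition of `[0,1]` it determines has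
`i`-th child interval starting at `childLeft s i = ∑_{m<i} (s_m + s_{d+m})`. -/
def childLeft {d : ℕ} (s : Fin (2*d-1) → ℝ) (i : Fin d) : ℝ :=
  ∑ m ∈ (Finset.range (i : ℕ)).attach,
    (s ⟨(m : ℕ), by have h := Finset.mem_range.mp m.2; have := i.isLt; omega⟩
      + s ⟨d + (m : ℕ), by have h := Finset.mem_range.mp m.2; have := i.isLt; omega⟩)

/-- The right endpoint of the `i`-th child interval of the partition determined by `s`. -/
def childRight {d : ℕ} (s : Fin (2*d-1) → ℝ) (i : Fin d) : ℝ :=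
  childLeft s i + s ⟨(i : ℕ), by have := i.isLt; omega⟩

/-- `A(j)`: the set of `2d` endpoints of the `d` child intervals of the partition of `[0,1]`
determined by the scaling vector `s = S(j)`. -/
def Apts {d : ℕ} (s : Fin (2*d-1) → ℝ) : Set ℝ :=
  ⋃ i : Fin d, {childLeft s i, childRight s i}

/-- An increasing `C^k` diffeomorphism of `[0,1]`. -/
structure IsDiffeo01 (k : ℕ) (φ : ℝ → ℝ) : Prop where
  smooth : ContDiffOn ℝ k φ I01
  mono : StrictMonoOn φ I01
  deriv_pos : ∀ x ∈ I01, 0 < derivWithin φ I01 x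
  bij : Set.BijOn φ I01 I01

/-- `D^k(A₁,A₂)`: increasing `C^k` diffeomorphisms of `[0,1]` mapping `A₁` onto `A₂`. -/
def Dk (k : ℕ) (A₁ A₂ : Set ℝ) : Set (ℝ → ℝ) :=
  {φ | IsDiffeo01 k φ ∧ φ '' A₁ = A₂}

/-- `D^k_var(M)(A₁,A₂)`: members of `D^k(A₁,A₂)` whose `k`-th derivative has variation `< M`. -/
def DkVar (k : ℕ) (M : ℝ) (A₁ A₂ : Set ℝ) : Set (ℝ → ℝ) :=
  {φ | φ ∈ Dk k A₁ A₂ ∧ ∀ x ∈ I01, ∀ y ∈ I01,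
    |iteratedDerivWithin k φ I01 x - iteratedDerivWithin k φ I01 y| < M}

/-- The renormalization `(L')⁻¹ ∘ φ ∘ L` of `φ`, where `L, L'` are the increasing affine
bijections from `[0,1]` onto `[a,b]` and `[a',b']` respectively. -/
def renorm (a b a' b' : ℝ) (φ : ℝ → ℝ) : ℝ → ℝ :=
  fun x => (φ (a + (b - a) * x) - a') / (b' - a')

/-- `R_{j₀} φ`: restrict `φ` to the `j₀`-th child interval of the partition determined by `s`
(mapped to the `j₀`-th child interval of the partition determined by `s'`) and renormalize. -/
def Rmap {d : ℕ} (s s' : Fin (2*d-1) → ℝ) (j₀ : Fin d) (φ : ℝ → ℝ) : ℝ → ℝ :=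
  renorm (childLeft s j₀) (childRight s j₀) (childLeft s' j₀) (childRight s' j₀) φ

/-- `j₀·j = (j₀, j_1, j_2, …)`. -/
def consSeq {d : ℕ} (j₀ : Fin d) (j : ℕ → Fin d) : ℕ → Fin d :=
  fun m => if m = 0 then j₀ else j (m - 1)

/-- The Cantor set of the system: `C = ⋂_{n ≥ 1} ⋃_{w of length n} I_w`. -/
def systemCantorSet {d : ℕ} (g : Fin d → ℝ → ℝ) : Set ℝ :=
  ⋂ n : ℕ, ⋃ w ∈ {w : List (Fin d) | w.length = n + 1}, wordMap g w '' I01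

end
section Aux
open Real

lemma uD01 : UniqueDiffOn ℝ I01 := uniqueDiffOn_Icc one_pos

/-- MVT for a `C¹` function on `[0,1]`. -/
lemma mvt01 (φ : ℝ → ℝ) (hφ : ContDiffOn ℝ 1 φ I01) {a b : ℝ}
    (ha : a ∈ I01) (hb : b ∈ I01) (hab : a < b) :
    ∃ ξ ∈ Set.Ioo a b, derivWithin φ I01 ξ * (b - a) = φ b - φ a := by
  have hsub : Set.Icc a b ⊆ I01 := Set.Icc_subset_Icc ha.1 hb.2
  have hder : ∀ x ∈ Set.Ioo a b, HasDerivAt φ (derivWithin φ I01 x) x := by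
    intro x hx
    have hxI : I01 ∈ nhds x := Icc_mem_nhds (lt_of_le_of_lt ha.1 hx.1) (lt_of_lt_of_le hx.2 hb.2)
    have hdx : DifferentiableAt ℝ φ x :=
      ((hφ.differentiableOn one_ne_zero) x ⟨le_of_lt (lt_of_le_of_lt ha.1 hx.1),
        le_of_lt (lt_of_lt_of_le hx.2 hb.2)⟩).differentiableAt hxI
    rw [derivWithin_of_mem_nhds hxI]
    exact hdx.hasDerivAt
  obtain ⟨ξ, hξ, hslope⟩ := exists_hasDerivAt_eq_slope φ _ hab (hφ.continuousOn.mono hsub) hder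
  exact ⟨ξ, hξ, by rw [hslope, div_mul_cancel₀ _ (by linarith : b - a ≠ 0)]⟩

/-- Bundle of quantitative facts about the branches of a Cantor system. -/
structure Consts {d : ℕ} (g : Fin d → ℝ → ℝ) (ε lo hi C : ℝ) : Prop where
  lo_pos : 0 < lo
  hi_lt_one : hi < 1
  lo_le_hi : lo ≤ hi
  C_pos : 0 < C
  maps : ∀ i, Set.MapsTo (g i) I01 I01
  incr : ∀ i, ∀ a ∈ I01, ∀ b ∈ I01, a ≤ b →
    lo * (b - a) ≤ g i b - g i a ∧ g i b - g i a ≤ hi * (b - a)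
  ratio : ∀ i, ∀ x ∈ I01, ∀ y ∈ I01, ∀ a b c e : ℝ, x ≤ a → a ≤ b → b ≤ y →
    x ≤ c → c < e → e ≤ y →
    (g i b - g i a) * (e - c) ≤ Real.exp (C * (y - x) ^ ε) * ((g i e - g i c) * (b - a))

lemma exists_consts {d : ℕ} (hd : 2 ≤ d) {ε : ℝ} (hε : ε ∈ Set.Ioc (0:ℝ) 1)
    {g : Fin d → ℝ → ℝ} (hg : IsCantorSystem 1 ε g) :
    ∃ lo hi C : ℝ, Consts g ε lo hi C := by
  haveI : Nonempty (Fin d) := ⟨⟨0, by omega⟩⟩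
  have hne : (Finset.univ : Finset (Fin d)).Nonempty := Finset.univ_nonempty
  have hI0 : (0:ℝ) ∈ I01 := ⟨le_refl 0, zero_le_one⟩
  have hIne : (I01 : Set ℝ).Nonempty := ⟨0, hI0⟩
  set f : Fin d → ℝ → ℝ := fun i => derivWithin (g i) I01 with hf
  have hcont : ∀ i, ContinuousOn (f i) I01 :=
    fun i => (hg.smooth i).continuousOn_derivWithin uD01 le_rfl
  choose xm hxm hmin using fun i => isCompact_Icc.exists_isMinOn hIne (hcont i)
  choose xM hxM hmax using fun i => isCompact_Icc.exists_isMaxOn hIne (hcont i)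
  choose H hHpos hHol using hg.holder
  set lo : ℝ := Finset.univ.inf' hne (fun i => f i (xm i)) with hlo
  set hi : ℝ := Finset.univ.sup' hne (fun i => f i (xM i)) with hhi
  set Hm : ℝ := Finset.univ.sup' hne H with hHm
  have lo_pos : 0 < lo := (Finset.lt_inf'_iff hne).2 fun i _ => hg.deriv_pos i _ (hxm i)
  have hi_lt : hi < 1 := (Finset.sup'_lt_iff hne).2 fun i _ => hg.deriv_lt_one i _ (hxM i)
  have hbound : ∀ i, ∀ x ∈ I01, lo ≤ f i x ∧ f i x ≤ hi := by
    intro i x hx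
    constructor
    · exact le_trans (Finset.inf'_le _ (Finset.mem_univ i)) (hmin i hx)
    · exact le_trans (hmax i hx) (Finset.le_sup' (fun i => f i (xM i)) (Finset.mem_univ i))
  have lo_le_hi : lo ≤ hi := le_trans (hbound ⟨0, by omega⟩ 0 hI0).1 (hbound _ 0 hI0).2
  have hHm_pos : 0 < Hm :=
    lt_of_lt_of_le (hHpos ⟨0, by omega⟩) (Finset.le_sup' _ (Finset.mem_univ _))
  have hHolf : ∀ i, ∀ x ∈ I01, ∀ y ∈ I01, |f i x - f i y| ≤ Hm * |x - y| ^ ε := by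
    intro i x hx y hy
    have h1 := hHol i x hx y hy
    rw [iteratedDerivWithin_one] at h1
    refine le_trans h1 (mul_le_mul_of_nonneg_right (Finset.le_sup' _ (Finset.mem_univ i)) ?_)
    exact Real.rpow_nonneg (abs_nonneg _) _
  set C : ℝ := Hm / lo with hC
  have C_pos : 0 < C := div_pos hHm_pos lo_pos
  have incr : ∀ i, ∀ a ∈ I01, ∀ b ∈ I01, a ≤ b →
      lo * (b - a) ≤ g i b - g i a ∧ g i b - g i a ≤ hi * (b - a) := by
    intro i a ha b hb hab
    rcases eq_or_lt_of_le hab with rfl | hab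
    · simp
    · obtain ⟨ξ, hξ, hξeq⟩ := mvt01 (g i) (hg.smooth i) ha hb hab
      have hξI : ξ ∈ I01 := ⟨le_trans ha.1 (le_of_lt hξ.1), le_trans (le_of_lt hξ.2) hb.2⟩
      have hb' := hbound i ξ hξI
      constructor
      · rw [← hξeq]; exact mul_le_mul_of_nonneg_right hb'.1 (by linarith)
      · rw [← hξeq]; exact mul_le_mul_of_nonneg_right hb'.2 (by linarith)
  refine ⟨lo, hi, C, lo_pos, hi_lt, lo_le_hi, C_pos, hg.maps, incr, ?_⟩
  -- the ratio/distortion inequality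
  intro i x hx y hy a b c e hxa hab hby hxc hce hey
  have haI : a ∈ I01 := ⟨le_trans hx.1 hxa, le_trans (le_trans hab hby) hy.2⟩
  have hbI : b ∈ I01 := ⟨le_trans haI.1 hab, le_trans hby hy.2⟩
  have hcI : c ∈ I01 := ⟨le_trans hx.1 hxc, le_trans (le_trans hce.le hey) hy.2⟩
  have heI : e ∈ I01 := ⟨le_trans hcI.1 hce.le, le_trans hey hy.2⟩
  have hyx : 0 ≤ y - x := by linarith
  have hT : 0 ≤ C * (y - x) ^ ε :=
    mul_nonneg C_pos.le (Real.rpow_nonneg hyx _)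
  have hexp1 : 1 ≤ Real.exp (C * (y - x) ^ ε) := Real.one_le_exp hT
  rcases eq_or_lt_of_le hab with rfl | hab'
  · simp [sub_self]
  · obtain ⟨ξ, hξ, hξeq⟩ := mvt01 (g i) (hg.smooth i) haI hbI hab'
    obtain ⟨η, hη, hηeq⟩ := mvt01 (g i) (hg.smooth i) hcI heI hce
    have hξI : ξ ∈ I01 := ⟨le_trans haI.1 hξ.1.le, le_trans hξ.2.le hbI.2⟩
    have hηI : η ∈ I01 := ⟨le_trans hcI.1 hη.1.le, le_trans hη.2.le heI.2⟩
    have habs : |ξ - η| ≤ y - x := by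
      rw [abs_le]
      constructor <;> nlinarith [hξ.1, hξ.2, hη.1, hη.2]
    have hrp : |ξ - η| ^ ε ≤ (y - x) ^ ε :=
      Real.rpow_le_rpow (abs_nonneg _) habs hε.1.le
    have h1 : f i ξ - f i η ≤ Hm * (y - x) ^ ε :=
      le_trans (le_trans (le_abs_self _) (hHolf i ξ hξI η hηI))
        (mul_le_mul_of_nonneg_left hrp hHm_pos.le)
    have hHmC : Hm = C * lo := by rw [hC]; field_simp
    have hfη := hbound i η hηI
    have hfηpos : 0 < f i η := lt_of_lt_of_le lo_pos hfη.1
    have hexp2 : C * (y - x) ^ ε + 1 ≤ Real.exp (C * (y - x) ^ ε) := Real.add_one_le_exp _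
    have e1 : Hm * (y - x) ^ ε ≤ (C * (y - x) ^ ε) * f i η := by
      rw [hHmC]
      calc C * lo * (y - x) ^ ε = (C * (y - x) ^ ε) * lo := by ring
        _ ≤ (C * (y - x) ^ ε) * f i η := mul_le_mul_of_nonneg_left hfη.1 hT
    have key : f i ξ ≤ Real.exp (C * (y - x) ^ ε) * f i η := by
      calc f i ξ ≤ f i η + (C * (y - x) ^ ε) * f i η := by linarith
        _ = (C * (y - x) ^ ε + 1) * f i η := by ring
        _ ≤ Real.exp (C * (y - x) ^ ε) * f i η :=
            mul_le_mul_of_nonneg_right hexp2 hfηpos.le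
    have hba : (0:ℝ) ≤ b - a := by linarith
    have hec : (0:ℝ) ≤ e - c := by linarith
    rw [← hξeq, ← hηeq]
    have h3 := mul_le_mul_of_nonneg_right
      (mul_le_mul_of_nonneg_right key hba) hec
    exact le_trans h3 (le_of_eq (by ring))

end Aux

section Words
open Real

variable {d : ℕ} {g : Fin d → ℝ → ℝ} {ε lo hi C : ℝ}

lemma wordMap_mem (hc : Consts g ε lo hi C) (w : List (Fin d)) :
    ∀ x ∈ I01, wordMap g w x ∈ I01 := by
  induction w with
  | nil => intro x hx; exact hx
  | cons i w ih => intro x hx; exact ih _ (hc.maps i hx)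

lemma word_incr (hc : Consts g ε lo hi C) (w : List (Fin d)) :
    ∀ a ∈ I01, ∀ b ∈ I01, a ≤ b →
      lo ^ w.length * (b - a) ≤ wordMap g w b - wordMap g w a ∧
      wordMap g w b - wordMap g w a ≤ hi ^ w.length * (b - a) := by
  induction w with
  | nil => intro a _ b _ hab; simp [wordMap]
  | cons i w ih =>
    intro a ha b hb hab
    have h1 := hc.incr i a ha b hb hab
    have ha' := hc.maps i ha
    have hb' := hc.maps i hb
    have hab' : g i a ≤ g i b := by nlinarith [hc.lo_pos]
    have h2 := ih _ ha' _ hb' hab'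
    have hlp : (0:ℝ) ≤ lo ^ w.length := pow_nonneg hc.lo_pos.le _
    have hhp : (0:ℝ) ≤ hi ^ w.length :=
      pow_nonneg (lt_of_lt_of_le hc.lo_pos hc.lo_le_hi).le _
    constructor
    · calc lo ^ (i :: w).length * (b - a) = lo ^ w.length * (lo * (b - a)) := by
            simp [List.length_cons, pow_succ]; ring
        _ ≤ lo ^ w.length * (g i b - g i a) := mul_le_mul_of_nonneg_left h1.1 hlp
        _ ≤ wordMap g w (g i b) - wordMap g w (g i a) := h2.1
    · calc wordMap g w (g i b) - wordMap g w (g i a)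
          ≤ hi ^ w.length * (g i b - g i a) := h2.2
        _ ≤ hi ^ w.length * (hi * (b - a)) := mul_le_mul_of_nonneg_left h1.2 hhp
        _ = hi ^ (i :: w).length * (b - a) := by simp [List.length_cons, pow_succ]; ring

lemma word_distort (hc : Consts g ε lo hi C) (hε : ε ∈ Set.Ioc (0:ℝ) 1)
    (v : List (Fin d)) (x y a b c e : ℝ)
    (hx : x ∈ I01) (hy : y ∈ I01) (hxa : x ≤ a) (hab : a ≤ b) (hby : b ≤ y)
    (hxc : x ≤ c) (hce : c < e) (hey : e ≤ y) :
    (wordMap g v b - wordMap g v a) * (e - c) ≤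
      Real.exp (C / (1 - hi ^ ε) * (y - x) ^ ε) *
        ((wordMap g v e - wordMap g v c) * (b - a)) := by
  have hi_pos : 0 < hi := lt_of_lt_of_le hc.lo_pos hc.lo_le_hi
  have hhiε : hi ^ ε < 1 := Real.rpow_lt_one hi_pos.le hc.hi_lt_one hε.1
  have hden : 0 < 1 - hi ^ ε := by linarith
  set D : ℝ := C / (1 - hi ^ ε) with hD
  have hDpos : 0 < D := div_pos hc.C_pos hden
  induction v generalizing x y a b c e with
  | nil =>
    have hyx : 0 ≤ y - x := by linarith
    have h1 : 1 ≤ Real.exp (D * (y - x) ^ ε) :=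
      Real.one_le_exp (mul_nonneg hDpos.le (Real.rpow_nonneg hyx _))
    simp only [wordMap, id]
    nlinarith [mul_nonneg (show (0:ℝ) ≤ b - a by linarith) (show (0:ℝ) ≤ e - c by linarith)]
  | cons i v ih =>
    have haI : a ∈ I01 := ⟨le_trans hx.1 hxa, le_trans (le_trans hab hby) hy.2⟩
    have hbI : b ∈ I01 := ⟨le_trans haI.1 hab, le_trans hby hy.2⟩
    have hcI : c ∈ I01 := ⟨le_trans hx.1 hxc, le_trans (le_trans hce.le hey) hy.2⟩
    have heI : e ∈ I01 := ⟨le_trans hcI.1 hce.le, le_trans hey hy.2⟩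
    have hx'I := hc.maps i hx
    have hy'I := hc.maps i hy
    have ha'I := hc.maps i haI
    have hb'I := hc.maps i hbI
    have hc'I := hc.maps i hcI
    have he'I := hc.maps i heI
    have hxa' : g i x ≤ g i a := by nlinarith [(hc.incr i x hx a haI hxa).1, hc.lo_pos]
    have hab' : g i a ≤ g i b := by nlinarith [(hc.incr i a haI b hbI hab).1, hc.lo_pos]
    have hby' : g i b ≤ g i y := by nlinarith [(hc.incr i b hbI y hy hby).1, hc.lo_pos]
    have hxc' : g i x ≤ g i c := by nlinarith [(hc.incr i x hx c hcI hxc).1, hc.lo_pos]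
    have hce' : g i c < g i e := by nlinarith [(hc.incr i c hcI e heI hce.le).1, hc.lo_pos]
    have hey' : g i e ≤ g i y := by nlinarith [(hc.incr i e heI y hy hey).1, hc.lo_pos]
    have IH := ih (g i x) (g i y) (g i a) (g i b) (g i c) (g i e)
      hx'I hy'I hxa' hab' hby' hxc' hce' hey'
    have hrat := hc.ratio i x hx y hy a b c e hxa hab hby hxc hce hey
    -- abbreviations
    set A := wordMap g v (g i b) - wordMap g v (g i a) with hA
    set B := wordMap g v (g i e) - wordMap g v (g i c) with hB
    have hBpos : 0 < B := by
      have := (word_incr hc v _ hc'I _ he'I hce'.le).1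
      have hlp : (0:ℝ) < lo ^ v.length := pow_pos hc.lo_pos _
      nlinarith
    have hec : (0:ℝ) ≤ e - c := by linarith
    have he'c' : (0:ℝ) < g i e - g i c := by linarith
    set E1 := Real.exp (D * (g i y - g i x) ^ ε) with hE1
    set E2 := Real.exp (C * (y - x) ^ ε) with hE2
    have hE1pos : 0 < E1 := Real.exp_pos _
    have step1 : (A * (e - c)) * (g i e - g i c) ≤
        (E1 * E2 * (B * (b - a))) * (g i e - g i c) := by
      calc (A * (e - c)) * (g i e - g i c)
          = (A * (g i e - g i c)) * (e - c) := by ring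
        _ ≤ (E1 * (B * (g i b - g i a))) * (e - c) :=
            mul_le_mul_of_nonneg_right IH hec
        _ = (E1 * B) * ((g i b - g i a) * (e - c)) := by ring
        _ ≤ (E1 * B) * (E2 * ((g i e - g i c) * (b - a))) :=
            mul_le_mul_of_nonneg_left hrat (mul_nonneg hE1pos.le hBpos.le)
        _ = (E1 * E2 * (B * (b - a))) * (g i e - g i c) := by ring
    have step2 : A * (e - c) ≤ E1 * E2 * (B * (b - a)) :=
      le_of_mul_le_mul_right step1 he'c'
    -- bound E1 * E2
    have hyx : 0 ≤ y - x := by linarith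
    have hgyx : 0 ≤ g i y - g i x := by linarith
    have hup : g i y - g i x ≤ hi * (y - x) := (hc.incr i x hx y hy (by linarith)).2
    have hrp1 : (g i y - g i x) ^ ε ≤ (hi * (y - x)) ^ ε :=
      Real.rpow_le_rpow hgyx hup hε.1.le
    have hrp2 : (hi * (y - x)) ^ ε = hi ^ ε * (y - x) ^ ε :=
      Real.mul_rpow hi_pos.le hyx
    have hsum : D * (g i y - g i x) ^ ε + C * (y - x) ^ ε ≤ D * (y - x) ^ ε := by
      have hDC : D * hi ^ ε + C = D := by
        rw [hD]; field_simp; ring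
      have : D * (g i y - g i x) ^ ε ≤ D * (hi ^ ε * (y - x) ^ ε) := by
        rw [← hrp2]; exact mul_le_mul_of_nonneg_left hrp1 hDpos.le
      have heq : D * (hi ^ ε * (y - x) ^ ε) + C * (y - x) ^ ε = D * (y - x) ^ ε := by
        linear_combination (y - x) ^ ε * hDC
      linarith
    have hE12 : E1 * E2 ≤ Real.exp (D * (y - x) ^ ε) := by
      rw [hE1, hE2, ← Real.exp_add]
      exact Real.exp_le_exp.2 hsum
    have hBba : 0 ≤ B * (b - a) := mul_nonneg hBpos.le (by linarith)
    calc A * (e - c) ≤ E1 * E2 * (B * (b - a)) := step2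
      _ ≤ Real.exp (D * (y - x) ^ ε) * (B * (b - a)) :=
          mul_le_mul_of_nonneg_right hE12 hBba
end Words

section Comb
open Real

variable {d : ℕ} {g : Fin d → ℝ → ℝ} {ε lo hi C : ℝ}

lemma wordMap_append (g : Fin d → ℝ → ℝ) (u v : List (Fin d)) (x : ℝ) :
    wordMap g (u ++ v) x = wordMap g v (wordMap g u x) := by
  induction u generalizing x with
  | nil => rfl
  | cons i u ih => simp only [List.cons_append, wordMap]; exact ih (g i x)

lemma wordLen_nil (g : Fin d → ℝ → ℝ) : wordLen g [] = 1 := by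
  simp [wordLen, wordMap]

lemma h01 : (0:ℝ) ∈ I01 ∧ (1:ℝ) ∈ I01 :=
  ⟨⟨le_refl 0, zero_le_one⟩, ⟨zero_le_one, le_refl 1⟩⟩

lemma wordLen_bounds (hc : Consts g ε lo hi C) (w : List (Fin d)) :
    lo ^ w.length ≤ wordLen g w ∧ wordLen g w ≤ hi ^ w.length := by
  have h := word_incr hc w 0 h01.1 1 h01.2 zero_le_one
  simpa [wordLen] using h

lemma wordLen_pos (hc : Consts g ε lo hi C) (w : List (Fin d)) : 0 < wordLen g w :=
  lt_of_lt_of_le (pow_pos hc.lo_pos _) (wordLen_bounds hc w).1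

lemma dword_succ (f : ℕ → Fin d) (n : ℕ) : dword f (n + 1) = dword f n ++ [f n] := by
  unfold dword
  rw [List.ofFn_succ']
  simp [List.concat_eq_append]

lemma dword_append (f : ℕ → Fin d) (q r : ℕ) :
    dword f (q + r) = dword f q ++ dword (fun m => f (q + m)) r := by
  induction r with
  | zero => simp [dword]
  | succ r ih =>
    rw [← add_assoc, dword_succ, ih, dword_succ, List.append_assoc]

lemma dword_congr {f f' : ℕ → Fin d} (n : ℕ) (h : ∀ m < n, f m = f' m) :
    dword f n = dword f' n := by
  unfold dword; congr 1; funext i; exact h i i.isLt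

lemma prod_div_telescope (f : ℕ → ℝ) (hf : ∀ t, f t ≠ 0) (p : ℕ) :
    ∏ t ∈ Finset.range p, f t / f (t + 1) = f 0 / f p := by
  induction p with
  | zero => simp [div_self (hf 0)]
  | succ p ih =>
    rw [Finset.prod_range_succ, ih]
    field_simp [hf p, hf (p+1)]

lemma mygeom_le (r : ℝ) (h0 : 0 ≤ r) (h1 : r < 1) (p : ℕ) :
    ∑ t ∈ Finset.range p, r ^ t ≤ (1 - r)⁻¹ := by
  have hden : 0 < 1 - r := by linarith
  rw [geom_sum_eq (ne_of_lt h1), ← one_div,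
    show (r ^ p - 1) / (r - 1) = (1 - r ^ p) / (1 - r) by rw [← neg_div_neg_eq]; ring_nf]
  gcongr
  nlinarith [pow_nonneg h0 p]

lemma div_le_mul_div {a b c e E : ℝ} (hb : 0 < b) (he : 0 < e)
    (h : a * e ≤ E * (b * c)) : a / b ≤ E * (c / e) := by
  have h2 : E * (c / e) * b = E * (b * c) / e := by ring
  rw [div_le_iff₀ hb, h2, le_div_iff₀ he]
  linarith

/-- Comparison of the child ratio for `u` and `u ++ v`. -/
lemma ratio_comp (hc : Consts g ε lo hi C) (hε : ε ∈ Set.Ioc (0:ℝ) 1)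
    (i : Fin d) (u v : List (Fin d)) :
    wordLen g (i :: (u ++ v)) * wordLen g u ≤
      Real.exp (C / (1 - hi ^ ε) * (hi ^ u.length) ^ ε)
        * (wordLen g (u ++ v) * wordLen g (i :: u)) ∧
    wordLen g (u ++ v) * wordLen g (i :: u) ≤
      Real.exp (C / (1 - hi ^ ε) * (hi ^ u.length) ^ ε)
        * (wordLen g (i :: (u ++ v)) * wordLen g u) := by
  have hi_pos : 0 < hi := lt_of_lt_of_le hc.lo_pos hc.lo_le_hi
  have hhiε : hi ^ ε < 1 := Real.rpow_lt_one hi_pos.le hc.hi_lt_one hε.1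
  have hden : 0 < 1 - hi ^ ε := by linarith
  have hDpos : 0 < C / (1 - hi ^ ε) := div_pos hc.C_pos hden
  set x := wordMap g u 0 with hxd
  set y := wordMap g u 1 with hyd
  set a := wordMap g u (g i 0) with had
  set b := wordMap g u (g i 1) with hbd
  have hxI : x ∈ I01 := wordMap_mem hc u 0 h01.1
  have hyI : y ∈ I01 := wordMap_mem hc u 1 h01.2
  have hg0 := hc.maps i h01.1
  have hg1 := hc.maps i h01.2
  have hmono : ∀ z ∈ I01, ∀ z' ∈ I01, z ≤ z' → wordMap g u z ≤ wordMap g u z' := by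
    intro z hz z' hz' hzz
    have := (word_incr hc u z hz z' hz' hzz).1
    nlinarith [pow_pos hc.lo_pos u.length]
  have hxa : x ≤ a := hmono 0 h01.1 _ hg0 hg0.1
  have hab : a ≤ b := hmono _ hg0 _ hg1 (by nlinarith [(hc.incr i 0 h01.1 1 h01.2 zero_le_one).1, hc.lo_pos])
  have hby : b ≤ y := hmono _ hg1 1 h01.2 hg1.2
  have hxy : x < y := by
    have := (word_incr hc u 0 h01.1 1 h01.2 zero_le_one).1
    nlinarith [pow_pos hc.lo_pos u.length]
  have hab' : a < b := by
    have h1 : 0 < wordLen g (i :: u) := wordLen_pos hc (i :: u)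
    simpa [wordLen, wordMap] using h1
  -- lengths as differences
  have len_iuv : wordLen g (i :: (u ++ v)) = wordMap g v b - wordMap g v a := by
    show wordMap g (u ++ v) (g i 1) - wordMap g (u ++ v) (g i 0) = _
    rw [wordMap_append, wordMap_append]
  have len_uv : wordLen g (u ++ v) = wordMap g v y - wordMap g v x := by
    show wordMap g (u ++ v) 1 - wordMap g (u ++ v) 0 = _
    rw [wordMap_append, wordMap_append]
  have len_u : wordLen g u = y - x := rfl
  have len_iu : wordLen g (i :: u) = b - a := rfl
  -- exp comparison
  have hyx : 0 ≤ y - x := by linarith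
  have hlen : y - x ≤ hi ^ u.length := by
    have := (wordLen_bounds hc u).2; rw [len_u] at this; exact this
  have hexple : Real.exp (C / (1 - hi ^ ε) * (y - x) ^ ε) ≤
      Real.exp (C / (1 - hi ^ ε) * (hi ^ u.length) ^ ε) := by
    apply Real.exp_le_exp.2
    apply mul_le_mul_of_nonneg_left _ hDpos.le
    exact Real.rpow_le_rpow hyx hlen hε.1.le
  constructor
  · have h1 := word_distort hc hε v x y a b x y hxI hyI hxa hab hby le_rfl hxy le_rfl
    rw [len_iuv, len_uv, len_u, len_iu]
    refine le_trans h1 (mul_le_mul_of_nonneg_right hexple ?_)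
    have hBpos : 0 < wordMap g v y - wordMap g v x := by
      rw [← len_uv]; exact wordLen_pos hc _
    nlinarith
  · have h1 := word_distort hc hε v x y x y a b hxI hyI le_rfl (by linarith) le_rfl hxa hab' hby
    rw [len_iuv, len_uv, len_u, len_iu]
    refine le_trans ?_ (mul_le_mul_of_nonneg_right hexple ?_)
    · exact le_trans (le_of_eq (by ring)) (le_trans h1 (le_of_eq (by ring)))
    · have hApos : 0 < wordMap g v b - wordMap g v a := by
        rw [← len_iuv]; exact wordLen_pos hc _
      nlinarith
end Comb

section Limits
open Real

variable {d : ℕ} {g : Fin d → ℝ → ℝ} {ε lo hi C : ℝ}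

lemma scalingData_child (g : Fin d → ℝ → ℝ) (w : List (Fin d)) (i : Fin d)
    (h : (i : ℕ) < 2 * d - 1) :
    scalingData g w ⟨i.1, h⟩ = wordLen g (i :: w) / wordLen g w := by
  rw [scalingData, dif_pos (show ((⟨i.1, h⟩ : Fin (2*d-1)) : ℕ) < d from i.isLt)]

lemma pow_rpow_comm (x : ℝ) (hx : 0 ≤ x) (q : ℕ) (ε : ℝ) :
    (x ^ q) ^ ε = (x ^ ε) ^ q := by
  rw [← Real.rpow_natCast x q, ← Real.rpow_mul hx, mul_comm, Real.rpow_mul hx,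
    Real.rpow_natCast]

lemma S_bounds (hc : Consts g ε lo hi C) (hε : ε ∈ Set.Ioc (0:ℝ) 1)
    {S : (ℕ → Fin d) → Fin (2*d-1) → ℝ} (hS : HasScalingFunction g S)
    (i : Fin d) (h2 : (i : ℕ) < 2 * d - 1) (u : List (Fin d)) (σ : ℕ → Fin d)
    (hσ : dword σ u.length = u) :
    0 < scalingData g u ⟨i.1, h2⟩ ∧
    S σ ⟨i.1, h2⟩ ≤ Real.exp (C / (1 - hi ^ ε) * (hi ^ u.length) ^ ε)
        * scalingData g u ⟨i.1, h2⟩ ∧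
    scalingData g u ⟨i.1, h2⟩ ≤ Real.exp (C / (1 - hi ^ ε) * (hi ^ u.length) ^ ε)
        * S σ ⟨i.1, h2⟩ := by
  set q := u.length with hq
  set E := Real.exp (C / (1 - hi ^ ε) * (hi ^ q) ^ ε) with hE
  have hpos : 0 < scalingData g u ⟨i.1, h2⟩ := by
    rw [scalingData_child]
    exact div_pos (wordLen_pos hc _) (wordLen_pos hc _)
  have hbig : ∀ M, q ≤ M →
      scalingData g (dword σ M) ⟨i.1, h2⟩ ≤ E * scalingData g u ⟨i.1, h2⟩ ∧
      scalingData g u ⟨i.1, h2⟩ ≤ E * scalingData g (dword σ M) ⟨i.1, h2⟩ := by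
    intro M hM
    have hdec : dword σ M = u ++ dword (fun m => σ (q + m)) (M - q) := by
      conv_lhs => rw [show M = q + (M - q) by omega]
      rw [dword_append, hσ]
    obtain ⟨r1, r2⟩ := ratio_comp hc hε i u (dword (fun m => σ (q + m)) (M - q))
    rw [hdec, scalingData_child, scalingData_child]
    constructor
    · exact div_le_mul_div (wordLen_pos hc _) (wordLen_pos hc _) r1
    · exact div_le_mul_div (wordLen_pos hc _) (wordLen_pos hc _) (by linarith [r2])
  have htend := tendsto_pi_nhds.mp (hS σ) ⟨i.1, h2⟩
  refine ⟨hpos, ?_, ?_⟩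
  · exact le_of_tendsto htend (Filter.eventually_atTop.2 ⟨q, fun M hM => (hbig M hM).1⟩)
  · exact ge_of_tendsto (htend.const_mul E)
      (Filter.eventually_atTop.2 ⟨q, fun M hM => (hbig M hM).2⟩)
end Limits

section Main
open Real

lemma dword_cons {d : ℕ} (j : ℕ → Fin d) (t p : ℕ) (htp : t < p) :
    dword (fun m => j (t + m)) (p - t) =
      (j t) :: dword (fun m => j (t + 1 + m)) (p - (t + 1)) := by
  have hq : p - t = (p - (t + 1)) + 1 := by omega
  rw [hq]
  unfold dword
  rw [List.ofFn_succ]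
  congr 1
  congr 1
  funext i
  show j (t + (i.succ : ℕ)) = j (t + 1 + (i : ℕ))
  exact congrArg j (by simp only [Fin.val_succ]; omega)

/-- for a `C^{1+ε}` Cantor system with scaling function `S`, the length
`|I_{j∩j'}|` is uniformly comparable to `ρ_S(j,j')`. -/
theorem stmt7 (d : ℕ) (hd : 2 ≤ d) (ε : ℝ) (hε : ε ∈ Set.Ioc (0:ℝ) 1)
    (g : Fin d → ℝ → ℝ) (hg : IsCantorSystem 1 ε g)
    (S : (ℕ → Fin d) → Fin (2*d-1) → ℝ) (hS : HasScalingFunction g S) :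
    ∃ K : ℝ, 1 ≤ K ∧ ∀ j j' : ℕ → Fin d, ∀ p : ℕ,
      (∀ t < p, j t = j' t) → j p ≠ j' p →
      (1 / K) * rhoS S j p ≤ wordLen g (dword j p) ∧
        wordLen g (dword j p) ≤ K * rhoS S j p := by
  obtain ⟨lo, hi, C, hc⟩ := exists_consts hd hε hg
  have hi_pos : 0 < hi := lt_of_lt_of_le hc.lo_pos hc.lo_le_hi
  have hhiε : hi ^ ε < 1 := Real.rpow_lt_one hi_pos.le hc.hi_lt_one hε.1
  have hrε0 : 0 ≤ hi ^ ε := Real.rpow_nonneg hi_pos.le ε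
  have hden : 0 < 1 - hi ^ ε := by linarith
  set D : ℝ := C / (1 - hi ^ ε) with hD
  have hDpos : 0 < D := div_pos hc.C_pos hden
  set K : ℝ := Real.exp (D * (1 - hi ^ ε)⁻¹) with hK
  have hK1 : 1 ≤ K := Real.one_le_exp (mul_nonneg hDpos.le (inv_nonneg.2 hden.le))
  have hKpos : 0 < K := lt_of_lt_of_le one_pos hK1
  refine ⟨K, hK1, ?_⟩
  intro j j' p _ _
  haveI : Nonempty (ℕ → Fin d) := ⟨fun _ => ⟨0, by omega⟩⟩
  have hco : ∀ t : ℕ, ((j t : ℕ)) < 2 * d - 1 := fun t => by have := (j t).isLt; omega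
  set L : ℝ := wordLen g (dword j p) with hL
  have hLpos : 0 < L := wordLen_pos hc _
  set F : ℕ → ℝ := fun t => wordLen g (dword (fun m => j (t + m)) (p - t)) with hF
  have hFpos : ∀ t, 0 < F t := fun t => wordLen_pos hc _
  set u : ℕ → List (Fin d) := fun t => dword (fun m => j (t + 1 + m)) (p - (t + 1)) with hu
  have hulen : ∀ t, (u t).length = p - (t + 1) := by
    intro t; simp [hu, dword]
  have hst : ∀ t < p, scalingData g (u t) ⟨(j t : ℕ), hco t⟩ = F t / F (t + 1) := by
    intro t htp
    rw [scalingData_child g (u t) (j t) (hco t)]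
    have h1 : (j t) :: u t = dword (fun m => j (t + m)) (p - t) :=
      (dword_cons j t p htp).symm
    rw [h1]
  -- the function appearing in rhoS
  set seqt : ℕ → (ℕ → Fin d) → ℕ → Fin d :=
    fun t w m => if t + 1 + m < p then j (t + 1 + m) else w (t + 1 + m - p) with hseqt
  set Pw : (ℕ → Fin d) → ℝ :=
    fun w => ∏ t ∈ Finset.range p, S (seqt t w) ⟨((j t) : ℕ), hco t⟩ with hPw
  have hrho : rhoS S j p = ⨆ w, Pw w := rfl
  -- per-t bounds
  set Et : ℕ → ℝ := fun t => Real.exp (D * (hi ^ ε) ^ (p - (t + 1))) with hEt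
  have hEtpos : ∀ t, 0 < Et t := fun t => Real.exp_pos _
  have hbounds : ∀ w, ∀ t < p,
      0 < S (seqt t w) ⟨((j t) : ℕ), hco t⟩ ∧
      S (seqt t w) ⟨((j t) : ℕ), hco t⟩ ≤ Et t * (F t / F (t + 1)) ∧
      F t / F (t + 1) ≤ Et t * S (seqt t w) ⟨((j t) : ℕ), hco t⟩ := by
    intro w t htp
    have hσ : dword (seqt t w) (u t).length = u t := by
      rw [hulen t]
      apply dword_congr
      intro m hm
      simp only [hseqt]
      rw [if_pos (by omega)]
    obtain ⟨hpos, hup, hlow⟩ := S_bounds hc hε hS (j t) (hco t) (u t) (seqt t w) hσ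
    rw [hst t htp] at hpos hup hlow
    rw [hulen t, pow_rpow_comm hi hi_pos.le _ ε] at hup hlow
    refine ⟨?_, hup, hlow⟩
    · have := hEtpos t
      nlinarith
  -- product of the error factors
  have hprodE : ∏ t ∈ Finset.range p, Et t ≤ K := by
    rw [hEt, ← Real.exp_sum]
    apply Real.exp_le_exp.2
    have hre : ∀ t ∈ Finset.range p, D * (hi ^ ε) ^ (p - (t + 1)) = D * (hi ^ ε) ^ (p - 1 - t) := by
      intro t _; congr 2; omega
    rw [Finset.sum_congr rfl hre, Finset.sum_range_reflect (fun t => D * (hi ^ ε) ^ t) p,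
      ← Finset.mul_sum]
    exact mul_le_mul_of_nonneg_left (mygeom_le _ hrε0 hhiε p) hDpos.le
  have hprodEpos : 0 < ∏ t ∈ Finset.range p, Et t :=
    Finset.prod_pos fun t _ => hEtpos t
  -- telescoping
  have htel : ∏ t ∈ Finset.range p, F t / F (t + 1) = L := by
    rw [prod_div_telescope F (fun t => (hFpos t).ne') p]
    have hF0 : F 0 = L := by
      rw [hF, hL]
      simp only [Nat.sub_zero]
      congr 1
      exact dword_congr p fun m _ => by rw [zero_add]
    have hFp : F p = 1 := by
      rw [hF]
      simp only [Nat.sub_self]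
      exact wordLen_nil g
    rw [hF0, hFp, div_one]
  -- bounds on Pw
  have hPw_nonneg : ∀ w, 0 ≤ Pw w := fun w =>
    Finset.prod_nonneg fun t ht => (hbounds w t (Finset.mem_range.1 ht)).1.le
  have hupper : ∀ w, Pw w ≤ K * L := by
    intro w
    have h1 : Pw w ≤ ∏ t ∈ Finset.range p, Et t * (F t / F (t + 1)) :=
      Finset.prod_le_prod (fun t ht => (hbounds w t (Finset.mem_range.1 ht)).1.le)
        (fun t ht => (hbounds w t (Finset.mem_range.1 ht)).2.1)
    rw [Finset.prod_mul_distrib, htel] at h1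
    exact le_trans h1 (mul_le_mul_of_nonneg_right hprodE hLpos.le)
  have hlower : ∀ w, L ≤ K * Pw w := by
    intro w
    have h1 : ∏ t ∈ Finset.range p, F t / F (t + 1) ≤
        ∏ t ∈ Finset.range p, Et t * S (seqt t w) ⟨((j t) : ℕ), hco t⟩ :=
      Finset.prod_le_prod
        (fun t ht => div_nonneg (hFpos t).le (hFpos (t + 1)).le)
        (fun t ht => (hbounds w t (Finset.mem_range.1 ht)).2.2)
    rw [htel, Finset.prod_mul_distrib] at h1
    calc L ≤ (∏ t ∈ Finset.range p, Et t) * Pw w := h1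
      _ ≤ K * Pw w := mul_le_mul_of_nonneg_right hprodE (hPw_nonneg w)
  -- conclude
  have hbdd : BddAbove (Set.range Pw) := by
    refine ⟨K * L, ?_⟩
    rintro x ⟨w, rfl⟩
    exact hupper w
  have hrho_le : rhoS S j p ≤ K * L := by
    rw [hrho]; exact ciSup_le hupper
  have hrho_ge : ∀ w, Pw w ≤ rhoS S j p := by
    intro w; rw [hrho]; exact le_ciSup hbdd w
  constructor
  · have h2 : (1 / K) * rhoS S j p ≤ (1 / K) * (K * L) :=
      mul_le_mul_of_nonneg_left hrho_le (by positivity)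
    calc (1 / K) * rhoS S j p ≤ (1 / K) * (K * L) := h2
      _ = L := by field_simp
  · obtain ⟨w₀⟩ := ‹Nonempty (ℕ → Fin d)›
    calc L ≤ K * Pw w₀ := hlower w₀
      _ ≤ K * rhoS S j p := mul_le_mul_of_nonneg_left (hrho_ge w₀) hKpos.le

end Main
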